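/- Let U, X, Y be Hilbert spaces and A : Y → X, B : U → X bounded operators. There exists a bounded operator Y₀ : U → Y with A Y₀ = B and ‖Y₀‖ ≤ 1 if and only if B B* ≼ A A* (i.e., A A* − B B* is positive semidefinite). -/

import Mathlib

open ContinuousLinearMap
open scoped ComplexInnerProductSpace

section Aux

variable {U X Y : Type*} [NormedAddCommGroup U] [InnerProductSpace ℂ U] [CompleteSpace U]
    [NormedAddCommGroup X] [InnerProductSpace ℂ X] [CompleteSpace X]
    [NormedAddCommGroup Y] [InnerProductSpace ℂ Y] [CompleteSpace Y]

lemma douglas_aux_re (A : Y →L[ℂ] X) (B : U →L[ℂ] X) (x : X) :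
    (A ∘L adjoint A - B ∘L adjoint B).reApplyInnerSelf x
      = ‖adjoint A x‖ ^ 2 - ‖adjoint B x‖ ^ 2 := by
  have h1 : ⟪A (adjoint A x), x⟫ = ⟪adjoint A x, adjoint A x⟫ :=
    (adjoint_inner_right A _ _).symm
  have h2 : ⟪B (adjoint B x), x⟫ = ⟪adjoint B x, adjoint B x⟫ :=
    (adjoint_inner_right B _ _).symm
  simp only [reApplyInnerSelf, sub_apply, comp_apply, inner_sub_left, h1, h2,
    inner_self_eq_norm_sq_to_K]
  rw [map_sub, ← RCLike.ofReal_pow, ← RCLike.ofReal_pow, RCLike.ofReal_re, RCLike.ofReal_re]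

lemma douglas_aux_selfAdjoint (A : Y →L[ℂ] X) (B : U →L[ℂ] X) :
    IsSelfAdjoint (A ∘L adjoint A - B ∘L adjoint B) := by
  have hA : IsSelfAdjoint (A ∘L adjoint A) := by
    rw [IsSelfAdjoint, star_eq_adjoint, adjoint_comp, adjoint_adjoint]
  have hB : IsSelfAdjoint (B ∘L adjoint B) := by
    rw [IsSelfAdjoint, star_eq_adjoint, adjoint_comp, adjoint_adjoint]
  exact hA.sub hB

end Aux

set_option maxHeartbeats 2000000 in
/-- Douglas factorization lemma: there exists a contraction `Y₀ : U → Y` with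
`A Y₀ = B` if and only if `A A* - B B* ⪰ 0`. -/
theorem douglas_contractive_factorization
    {U X Y : Type*} [NormedAddCommGroup U] [InnerProductSpace ℂ U] [CompleteSpace U]
    [NormedAddCommGroup X] [InnerProductSpace ℂ X] [CompleteSpace X]
    [NormedAddCommGroup Y] [InnerProductSpace ℂ Y] [CompleteSpace Y]
    (A : Y →L[ℂ] X) (B : U →L[ℂ] X) :
    (∃ Y₀ : U →L[ℂ] Y, A ∘L Y₀ = B ∧ ‖Y₀‖ ≤ 1) ↔
      (A ∘L adjoint A - B ∘L adjoint B).IsPositive := by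
  constructor
  · rintro ⟨Y₀, hAY, hY₀⟩
    refine ⟨(douglas_aux_selfAdjoint A B).isSymmetric, fun x => ?_⟩
    rw [douglas_aux_re, sub_nonneg]
    have hB : adjoint B = adjoint Y₀ ∘L adjoint A := by
      rw [← hAY, adjoint_comp]
    have : ‖adjoint B x‖ ≤ ‖adjoint A x‖ := by
      rw [hB]
      calc ‖(adjoint Y₀ ∘L adjoint A) x‖ ≤ ‖adjoint Y₀‖ * ‖adjoint A x‖ :=
            (adjoint Y₀).le_opNorm _
        _ ≤ 1 * ‖adjoint A x‖ := by
            gcongr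
            rw [ContinuousLinearMap.adjoint.norm_map Y₀]; exact hY₀
        _ = ‖adjoint A x‖ := one_mul _
    exact pow_le_pow_left₀ (norm_nonneg _) this 2
  · intro hpos
    have hle : ∀ x : X, ‖adjoint B x‖ ≤ ‖adjoint A x‖ := by
      intro x
      have := hpos.2 x
      rw [douglas_aux_re, sub_nonneg] at this
      exact (pow_le_pow_iff_left₀ (norm_nonneg _) (norm_nonneg _) two_ne_zero).mp this
    -- well-definedness
    have hwd : ∀ x x' : X, adjoint A x = adjoint A x' → adjoint B x = adjoint B x' := by
      intro x x' h
      have : ‖adjoint B (x - x')‖ ≤ ‖adjoint A (x - x')‖ := hle _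
      rw [map_sub, map_sub, h, sub_self, norm_zero] at this
      have := norm_le_zero_iff.mp this
      exact sub_eq_zero.mp this
    set M : Submodule ℂ Y := LinearMap.range (adjoint A : X →ₗ[ℂ] Y) with hM
    -- the map T₀ : M → U, A* x ↦ B* x
    have hch : ∀ m : M, adjoint A (Classical.choose m.2) = (m : Y) :=
      fun m => Classical.choose_spec m.2
    have hwd' : ∀ (m : M) (x : X), adjoint A x = (m : Y) →
        adjoint B (Classical.choose m.2) = adjoint B x := by
      intro m x hx
      exact hwd _ _ (by rw [hch]; exact hx.symm)
    let g : M →ₗ[ℂ] U :=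
      { toFun := fun m => adjoint B (Classical.choose m.2)
        map_add' := by
          intro m m'
          have h1 := hwd' (m + m') (Classical.choose m.2 + Classical.choose m'.2)
            (by rw [map_add, hch, hch]; rfl)
          show adjoint B (Classical.choose (m + m').2) = _
          rw [h1, map_add]
        map_smul' := by
          intro c m
          have h1 := hwd' (c • m) (c • Classical.choose m.2)
            (by rw [map_smul, hch]; rfl)
          show adjoint B (Classical.choose (c • m).2) = _
          rw [h1, map_smul]
          rfl }
    have hg : ∀ m : M, ‖g m‖ ≤ 1 * ‖m‖ := by
      intro m
      rw [one_mul]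
      calc ‖adjoint B (Classical.choose m.2)‖ ≤ ‖adjoint A (Classical.choose m.2)‖ := hle _
        _ = ‖(m : Y)‖ := by rw [hch]
        _ = ‖m‖ := rfl
    let T₀ : M →L[ℂ] U := g.mkContinuous 1 hg
    set Mc : Submodule ℂ Y := M.topologicalClosure with hMc
    haveI : CompleteSpace Mc := M.isClosed_topologicalClosure.completeSpace_coe
    -- inclusion e : M →L Mc
    let einc : M →ₗ[ℂ] Mc := Submodule.inclusion M.le_topologicalClosure
    have he_norm : ∀ m : M, ‖einc m‖ = ‖m‖ := fun m => rfl
    let e : M →L[ℂ] Mc := einc.mkContinuous 1 (fun m => by rw [he_norm, one_mul])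
    have h_e : ∀ m : M, ‖m‖ ≤ (1 : NNReal) * ‖e m‖ := fun m => by
      rw [NNReal.coe_one, one_mul]; rfl
    have h_dense : DenseRange e := by
      intro z
      have hz : (z : Y) ∈ closure (M : Set Y) := by
        rw [← Submodule.topologicalClosure_coe]; exact z.2
      rw [mem_closure_iff_seq_limit] at hz
      obtain ⟨u, hu, hlim⟩ := hz
      rw [mem_closure_iff_seq_limit]
      refine ⟨fun n => e ⟨u n, hu n⟩, fun n => ⟨_, rfl⟩, ?_⟩
      exact tendsto_subtype_rng.mpr hlim
    have h_ue := isUniformEmbedding_of_bound e h_e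
    let T₁ : Mc →L[ℂ] U := T₀.extend e
    have hT₁ : ‖T₁‖ ≤ 1 * ‖T₀‖ := T₀.opNorm_extend_le h_dense h_e
    let P : Y →L[ℂ] Mc := Submodule.orthogonalProjectionOnto Mc
    let T : Y →L[ℂ] U := T₁ ∘L P
    have hTnorm : ‖T‖ ≤ 1 := by
      calc ‖T‖ ≤ ‖T₁‖ * ‖P‖ := opNorm_comp_le _ _
        _ ≤ (1 * ‖T₀‖) * 1 := by
            refine mul_le_mul hT₁ (Submodule.orthogonalProjectionOnto_norm_le Mc) (norm_nonneg P) ?_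
            positivity
        _ ≤ 1 := by
            rw [one_mul, mul_one]
            exact g.mkContinuous_norm_le zero_le_one hg
    have hTA : ∀ x : X, T (adjoint A x) = adjoint B x := by
      intro x
      have hm : adjoint A x ∈ M := ⟨x, rfl⟩
      have hmc : adjoint A x ∈ Mc := M.le_topologicalClosure hm
      have hP : P (adjoint A x) = ⟨adjoint A x, hmc⟩ :=
        Submodule.orthogonalProjectionOnto_mem_subspace_eq_self (K := Mc) ⟨adjoint A x, hmc⟩
      have hee : e ⟨adjoint A x, hm⟩ = ⟨adjoint A x, hmc⟩ := rfl
      have hext : T₁ (e ⟨adjoint A x, hm⟩) = T₀ ⟨adjoint A x, hm⟩ :=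
        ContinuousLinearMap.extend_eq T₀ h_dense h_ue.isUniformInducing _
      have hT₀ : T₀ (⟨adjoint A x, hm⟩ : M) = adjoint B x :=
        hwd' ⟨adjoint A x, hm⟩ x rfl
      show T₁ (P (adjoint A x)) = adjoint B x
      rw [hP, ← hee, hext, hT₀]
    refine ⟨adjoint T, ?_, by rw [ContinuousLinearMap.adjoint.norm_map T]; exact hTnorm⟩
    have hcomp : T ∘L adjoint A = adjoint B := ContinuousLinearMap.ext hTA
    calc A ∘L adjoint T = adjoint (T ∘L adjoint A) := by
          conv_rhs => rw [adjoint_comp, adjoint_adjoint]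
      _ = B := by rw [hcomp, adjoint_adjoint]
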